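/- For every integer K ≥ 4, the function h₃(d) = 4d(3K² − 6dK + 4d² − 3K + 2)/(K(K−1)(K−2)) over integers 0 ≤ d ≤ K attains its maximum uniquely at d = K. -/
import Mathlib


/-- For every integer `K ≥ 4`, the function
`h₃(d) = 4d(3K²−6dK+4d²−3K+2)/(K(K−1)(K−2))` over integers `0 ≤ d ≤ K`
attains its maximum uniquely at `d = K`. -/
theorem h3_max_unique_at_K (K : ℕ) (hK : 4 ≤ K) :
    ∀ d : ℕ, d ≤ K →
      (4 * (d : ℝ) * (3 * (K : ℝ) ^ 2 - 6 * d * K + 4 * d ^ 2 - 3 * K + 2) /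
          ((K : ℝ) * ((K : ℝ) - 1) * ((K : ℝ) - 2)) ≤
        4 * (K : ℝ) * (3 * (K : ℝ) ^ 2 - 6 * K * K + 4 * (K : ℝ) ^ 2 - 3 * K + 2) /
          ((K : ℝ) * ((K : ℝ) - 1) * ((K : ℝ) - 2))) ∧
      (d ≠ K →
        4 * (d : ℝ) * (3 * (K : ℝ) ^ 2 - 6 * d * K + 4 * d ^ 2 - 3 * K + 2) /
          ((K : ℝ) * ((K : ℝ) - 1) * ((K : ℝ) - 2)) <
        4 * (K : ℝ) * (3 * (K : ℝ) ^ 2 - 6 * K * K + 4 * (K : ℝ) ^ 2 - 3 * K + 2) /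
          ((K : ℝ) * ((K : ℝ) - 1) * ((K : ℝ) - 2))) := by
  intro d hd
  have hK' : (4 : ℝ) ≤ (K : ℝ) := by exact_mod_cast hK
  have hd' : (d : ℝ) ≤ (K : ℝ) := by exact_mod_cast hd
  have hD : (0 : ℝ) < (K : ℝ) * ((K : ℝ) - 1) * ((K : ℝ) - 2) := by
    have : (0:ℝ) < (K:ℝ) := by linarith
    have : (0:ℝ) < (K:ℝ) - 1 := by linarith
    have : (0:ℝ) < (K:ℝ) - 2 := by linarith
    positivity
  have hq : (0 : ℝ) < 4 * (d : ℝ) ^ 2 - 2 * K * d + ((K : ℝ) - 1) * ((K : ℝ) - 2) := by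
    nlinarith [sq_nonneg (4 * (d : ℝ) - K), sq_nonneg ((K : ℝ) - 2), hK']
  constructor
  · rw [div_le_div_iff_of_pos_right hD]
    nlinarith [mul_nonneg (sub_nonneg.2 hd') hq.le]
  · intro hne
    have h1 : d + 1 ≤ K := lt_of_le_of_ne hd hne
    have h1' : (d : ℝ) + 1 ≤ (K : ℝ) := by exact_mod_cast h1
    rw [div_lt_div_iff_of_pos_right hD]
    nlinarith [mul_pos (by linarith : (0:ℝ) < (K : ℝ) - d) hq]
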